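/- Let P be a finite set of points in the plane ℝ² that is not contained in a single line. Then for every pair of distinct points p, q ∈ P that are not visible to each other (i.e., some point of P lies in the open segment between p and q), there exists a point r ∈ P with r ≠ p and r ≠ q such that r is visible to p and r is visible to q. -/

import Mathlib

/-- Two points `p q` are visible to each other with respect to the point set `P`
if they are distinct and no point of `P` lies in the open segment between them. -/
def Visible (P : Finset (ℝ × ℝ)) (p q : ℝ × ℝ) : Prop :=
  p ≠ q ∧ ∀ r ∈ P, r ∉ openSegment ℝ p q

theorem stmt_0 (P : Finset (ℝ × ℝ)) (hcol : ¬ Collinear ℝ (P : Set (ℝ × ℝ)))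
    (p q : ℝ × ℝ) (hp : p ∈ P) (hq : q ∈ P) (hpq : p ≠ q)
    (hnotvis : ∃ r ∈ P, r ∈ openSegment ℝ p q) :
    ∃ r ∈ P, r ≠ p ∧ r ≠ q ∧ Visible P r p ∧ Visible P r q := by
  classical
  set f : ℝ × ℝ → ℝ :=
    fun x => (q.1 - p.1) * (x.2 - p.2) - (q.2 - p.2) * (x.1 - p.1) with hf
  have hfp : f p = 0 := by simp [hf]
  have hfq : f q = 0 := by simp [hf]; ring
  have haff : ∀ a b : ℝ, a + b = 1 → ∀ u v : ℝ × ℝ,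
      f (a • u + b • v) = a * f u + b * f v := by
    intro a b hab u v
    have hb : b = 1 - a := by linarith
    subst hb
    simp only [hf, Prod.fst_add, Prod.snd_add, Prod.smul_fst, Prod.smul_snd, smul_eq_mul]
    ring
  -- there is a point of P off the line pq
  have hS : ∃ r₀ ∈ P, f r₀ ≠ 0 := by
    by_contra h
    push_neg at h
    apply hcol
    rw [collinear_iff_of_mem (Finset.mem_coe.mpr hp)]
    refine ⟨q - p, fun x hx => ?_⟩
    have hfx : (q.1 - p.1) * (x.2 - p.2) - (q.2 - p.2) * (x.1 - p.1) = 0 := h x hx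
    by_cases h1 : q.1 - p.1 = 0
    · have h2 : q.2 - p.2 ≠ 0 := by
        intro h2
        exact hpq (Prod.ext (by linarith) (by linarith)).symm
      have hx1 : x.1 - p.1 = 0 := by
        have h3 : (q.2 - p.2) * (x.1 - p.1) = 0 := by linear_combination (x.2 - p.2) * h1 - hfx
        rcases mul_eq_zero.mp h3 with h' | h'
        · exact absurd h' h2
        · exact h'
      refine ⟨(x.2 - p.2) / (q.2 - p.2), Prod.ext ?_ ?_⟩ <;>
        simp only [vadd_eq_add, Prod.smul_fst, Prod.smul_snd, Prod.fst_add, Prod.snd_add,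
          Prod.fst_sub, Prod.snd_sub, smul_eq_mul]
      · rw [h1]; linarith
      · field_simp
        ring
    · refine ⟨(x.1 - p.1) / (q.1 - p.1), Prod.ext ?_ ?_⟩ <;>
        simp only [vadd_eq_add, Prod.smul_fst, Prod.smul_snd, Prod.fst_add, Prod.snd_add,
          Prod.fst_sub, Prod.snd_sub, smul_eq_mul]
      · field_simp
        ring
      · field_simp
        linear_combination hfx
  obtain ⟨r₀, hr₀P, hr₀f⟩ := hS
  obtain ⟨r, hrS, hrmin⟩ := Finset.exists_min_image (P.filter fun x => f x ≠ 0)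
    (fun x => |f x|) ⟨r₀, Finset.mem_filter.mpr ⟨hr₀P, hr₀f⟩⟩
  have hrP : r ∈ P := (Finset.mem_filter.mp hrS).1
  have hrf : f r ≠ 0 := (Finset.mem_filter.mp hrS).2
  have key : ∀ w : ℝ × ℝ, f w = 0 → ∀ s ∈ P, s ∉ openSegment ℝ r w := by
    intro w hw s hs hmem
    obtain ⟨a, b, ha, hb, hab, hsab⟩ := hmem
    have hfs : f s = a * f r := by
      rw [← hsab, haff a b hab, hw]; ring
    have hfs0 : f s ≠ 0 := by
      rw [hfs]
      exact mul_ne_zero (ne_of_gt ha) hrf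
    have hmin := hrmin s (Finset.mem_filter.mpr ⟨hs, hfs0⟩)
    have ha1 : a < 1 := by linarith
    rw [hfs, abs_mul, abs_of_pos ha] at hmin
    nlinarith [abs_pos.mpr hrf]
  have hrp : r ≠ p := fun h => hrf (h ▸ hfp)
  have hrq : r ≠ q := fun h => hrf (h ▸ hfq)
  exact ⟨r, hrP, hrp, hrq, ⟨hrp, key p hfp⟩, ⟨hrq, key q hfq⟩⟩
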